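/- Fix 0 < p ≤ 1, let N ≥ 1, let A ⊆ C_N be a nonempty subset, and let δ ≥ 0. Let x be uniform on C_N and let l ∈ {0,1}^N have independent Bernoulli(p) coordinates, independent of x. Then P( |d_l(x,A) − Δ(A,p)| ≥ δ + 4√N ) ≤ 4·e^{−δ²/N}. -/

import Mathlib

/-- The randomized Hamming distance `d_l(x,y) = Σ_{i : x i ≠ y i} l i`, where the coordinates
with `l i = 1` are the ones that are counted. -/
def dl {ι : Type*} [Fintype ι] (l x y : ι → Bool) : ℕ :=
  (Finset.univ.filter fun i => x i ≠ y i ∧ l i = true).card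

/-- The randomized Hamming distance from a point `x` to a subset `A`:
`d_l(x,A) = min_{y ∈ A} d_l(x,y)`. -/
noncomputable def dlToSet {ι : Type*} [Fintype ι] (l x : ι → Bool) (A : Set (ι → Bool)) : ℕ :=
  sInf ((fun y => dl l x y) '' A)

/-- The probability `p^{|l|}(1-p)^{n-|l|}` of the vector `l` of `n` independent
Bernoulli(p) coordinates. -/
noncomputable def bernWeight {ι : Type*} [Fintype ι] (p : ℝ) (l : ι → Bool) : ℝ :=
  p ^ (Finset.univ.filter fun i => l i = true).card *
    (1 - p) ^ (Finset.univ.filter fun i => l i = false).card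

/-- `Δ(A,p)`: the expectation of `d_l(x,A)` when `x` is uniform on the cube and `l` has
independent Bernoulli(p) coordinates. -/
noncomputable def avgDistP {ι : Type*} [Fintype ι] [DecidableEq ι] (p : ℝ)
    (A : Set (ι → Bool)) : ℝ :=
  ∑ l : ι → Bool, ∑ x : ι → Bool,
    (bernWeight p l / 2 ^ Fintype.card ι) * (dlToSet l x A : ℝ)

section StmtAux

private lemma exp_quad11 {t : ℝ} (ht0 : 0 ≤ t) (ht1 : t ≤ 1) :
    Real.exp t ≤ 1 + t + t ^ 2 := by
  have h := Real.exp_bound' ht0 ht1 (n := 3) (by norm_num)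
  simp [Finset.sum_range_succ, Nat.factorial] at h
  have ht3 : t ^ 3 ≤ t ^ 2 := pow_le_pow_of_le_one ht0 ht1 (by norm_num)
  nlinarith

private lemma conv_exp11 {y t : ℝ} (hy : |y| ≤ 1/2) :
    Real.exp (2 * t * y) ≤ Real.cosh t + 2 * y * Real.sinh t := by
  rw [abs_le] at hy
  have h := convexOn_exp.2 (Set.mem_univ (-t)) (Set.mem_univ t)
    (by linarith : (0:ℝ) ≤ 1/2 - y) (by linarith : (0:ℝ) ≤ 1/2 + y) (by ring)
  simp only [smul_eq_mul] at h
  rw [Real.cosh_eq, Real.sinh_eq]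
  calc Real.exp (2 * t * y) = Real.exp ((1/2 - y) * (-t) + (1/2 + y) * t) := by ring_nf
    _ ≤ (1/2 - y) * Real.exp (-t) + (1/2 + y) * Real.exp t := h
    _ = (Real.exp t + Real.exp (-t)) / 2 + 2 * y * ((Real.exp t - Real.exp (-t)) / 2) := by ring

variable {α : Type*} [Fintype α] [Nonempty α]

private lemma onevar11 (w : α → ℝ) (hw0 : ∀ a, 0 ≤ w a) (hw1 : ∑ a, w a = 1)
    (v : α → ℝ) (hv : ∀ a b, v a - v b ≤ 1) {t : ℝ} (ht0 : 0 ≤ t) (ht1 : t ≤ 1) :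
    ∑ a, w a * Real.exp (2 * t * (v a - ∑ b, w b * v b)) ≤ Real.exp (t ^ 2) := by
  obtain ⟨a₀, -, ha₀⟩ := Finset.exists_mem_eq_inf' (Finset.univ_nonempty (α := α)) v
  set lo := Finset.univ.inf' Finset.univ_nonempty v with hlo
  set μ := ∑ b, w b * v b with hμ
  have hvlo : ∀ a, lo ≤ v a := fun a => Finset.inf'_le v (Finset.mem_univ a)
  have hvhi : ∀ a, v a ≤ lo + 1 := fun a => by
    have := hv a a₀; rw [ha₀]; linarith
  have hμlo : lo ≤ μ := by
    calc lo = ∑ a, w a * lo := by rw [← Finset.sum_mul, hw1, one_mul]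
    _ ≤ μ := Finset.sum_le_sum fun a _ => mul_le_mul_of_nonneg_left (hvlo a) (hw0 a)
  have hμhi : μ ≤ lo + 1 := by
    calc μ ≤ ∑ a, w a * (lo + 1) :=
        Finset.sum_le_sum fun a _ => mul_le_mul_of_nonneg_left (hvhi a) (hw0 a)
    _ = lo + 1 := by rw [← Finset.sum_mul, hw1, one_mul]
  set c := lo + 1/2 with hc
  set s := 2 * (μ - c) with hs
  have habs : |s| ≤ 1 := by rw [abs_le]; constructor <;> [skip; skip] <;> simp [hs, hc] <;> linarith
  have key : ∀ a, Real.exp (2 * t * (v a - c)) ≤ Real.cosh t + 2 * (v a - c) * Real.sinh t := by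
    intro a
    exact conv_exp11 (by rw [abs_le]; constructor <;> [linarith [hvlo a]; linarith [hvhi a]])
  have step1 : ∑ a, w a * Real.exp (2 * t * (v a - μ))
      = Real.exp (2 * t * (c - μ)) * ∑ a, w a * Real.exp (2 * t * (v a - c)) := by
    rw [Finset.mul_sum]
    refine Finset.sum_congr rfl fun a _ => ?_
    rw [show 2 * t * (v a - μ) = 2 * t * (c - μ) + 2 * t * (v a - c) by ring, Real.exp_add]
    ring
  have step2 : ∑ a, w a * Real.exp (2 * t * (v a - c))
      ≤ Real.cosh t + s * Real.sinh t := by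
    calc ∑ a, w a * Real.exp (2 * t * (v a - c))
        ≤ ∑ a, w a * (Real.cosh t + 2 * (v a - c) * Real.sinh t) :=
          Finset.sum_le_sum fun a _ => mul_le_mul_of_nonneg_left (key a) (hw0 a)
      _ = Real.cosh t + s * Real.sinh t := by
          have e1 : ∀ a : α, w a * (Real.cosh t + 2 * (v a - c) * Real.sinh t)
              = w a * Real.cosh t + (w a * v a) * (2 * Real.sinh t)
                - w a * (c * (2 * Real.sinh t)) := fun a => by ring
          simp_rw [e1]
          rw [Finset.sum_sub_distrib, Finset.sum_add_distrib, ← Finset.sum_mul, ← Finset.sum_mul,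
            ← Finset.sum_mul, hw1, ← hμ]
          rw [hs]; ring
  have hsinh : t ≤ Real.sinh t := Real.self_le_sinh_iff.2 ht0
  have step3 : Real.exp (2 * t * (c - μ)) * (Real.cosh t + s * Real.sinh t)
      ≤ Real.exp (t ^ 2) := by
    have h1 : Real.cosh t + s * Real.sinh t ≤ Real.exp (Real.cosh t - 1 + s * Real.sinh t) := by
      have := Real.add_one_le_exp (Real.cosh t - 1 + s * Real.sinh t)
      linarith
    have h2 : Real.exp (2 * t * (c - μ)) * (Real.cosh t + s * Real.sinh t)
        ≤ Real.exp (2 * t * (c - μ)) * Real.exp (Real.cosh t - 1 + s * Real.sinh t) :=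
      mul_le_mul_of_nonneg_left h1 (Real.exp_pos _).le
    rw [← Real.exp_add] at h2
    refine h2.trans (Real.exp_le_exp.2 ?_)
    have harg : 2 * t * (c - μ) + (Real.cosh t - 1 + s * Real.sinh t)
        = Real.cosh t - 1 + s * (Real.sinh t - t) := by rw [hs]; ring
    rw [harg]
    have hss : s * (Real.sinh t - t) ≤ Real.sinh t - t := by
      have := abs_le.1 habs
      nlinarith [hsinh]
    have hexp : Real.cosh t - 1 + (Real.sinh t - t) = Real.exp t - 1 - t := by
      have := Real.cosh_add_sinh t; linarith
    have := exp_quad11 ht0 ht1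
    nlinarith
  calc ∑ a, w a * Real.exp (2 * t * (v a - μ))
      = Real.exp (2 * t * (c - μ)) * ∑ a, w a * Real.exp (2 * t * (v a - c)) := step1
    _ ≤ Real.exp (2 * t * (c - μ)) * (Real.cosh t + s * Real.sinh t) :=
        mul_le_mul_of_nonneg_left step2 (Real.exp_pos _).le
    _ ≤ Real.exp (t ^ 2) := step3

set_option linter.unusedSectionVars false in
private lemma sum_succ11 {n : ℕ} (F : (Fin (n+1) → α) → ℝ) :
    ∑ g : Fin (n+1) → α, F g = ∑ a : α, ∑ ω : Fin n → α, F (Fin.cons a ω) := by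
  rw [← (Fin.consEquiv (fun _ => α)).sum_comp F, Fintype.sum_prod_type]
  rfl

set_option linter.unusedSectionVars false in
private lemma sumW11 (w : α → ℝ) (hw1 : ∑ a, w a = 1) :
    ∀ n, ∑ g : Fin n → α, ∏ i, w (g i) = 1 := by
  intro n
  induction n with
  | zero => simp
  | succ n ih =>
    rw [sum_succ11]
    simp only [Fin.prod_univ_succ, Fin.cons_zero, Fin.cons_succ]
    calc ∑ a : α, ∑ ω : Fin n → α, w a * ∏ i : Fin n, w (ω i)
        = ∑ a : α, w a * ∑ ω : Fin n → α, ∏ i : Fin n, w (ω i) := by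
          simp_rw [Finset.mul_sum]
      _ = 1 := by rw [ih]; simp [hw1]

private lemma mgf11 (w : α → ℝ) (hw0 : ∀ a, 0 ≤ w a) (hw1 : ∑ a, w a = 1) :
    ∀ (n : ℕ) (f : (Fin n → α) → ℝ),
    (∀ g h : Fin n → α, ∀ i : Fin n, (∀ j, j ≠ i → g j = h j) → f g - f h ≤ 1) →
    ∀ {t : ℝ}, 0 ≤ t → t ≤ 1 →
    ∑ g : Fin n → α, (∏ i, w (g i)) *
      Real.exp (2 * t * (f g - ∑ h : Fin n → α, (∏ i, w (h i)) * f h))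
      ≤ Real.exp (n * t ^ 2) := by
  intro n
  induction n with
  | zero =>
    intro f hf t ht0 ht1
    simp
  | succ n ih =>
    intro f hf t ht0 ht1
    set W : (Fin n → α) → ℝ := fun ω => ∏ i, w (ω i) with hW
    have hW0 : ∀ ω, 0 ≤ W ω := fun ω => Finset.prod_nonneg fun i _ => hw0 _
    have hW1 : ∑ ω : Fin n → α, W ω = 1 := sumW11 w hw1 n
    set m : α → ℝ := fun a => ∑ ω : Fin n → α, W ω * f (Fin.cons a ω) with hm
    set E : ℝ := ∑ h : Fin (n+1) → α, (∏ i, w (h i)) * f h with hE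
    have hEm : E = ∑ a, w a * m a := by
      rw [hE, sum_succ11]
      refine Finset.sum_congr rfl fun a _ => ?_
      rw [hm, Finset.mul_sum]
      refine Finset.sum_congr rfl fun ω _ => ?_
      rw [Fin.prod_univ_succ, Fin.cons_zero]
      simp only [Fin.cons_succ]
      ring
    have hmdiff : ∀ a b, m a - m b ≤ 1 := by
      intro a b
      have : m a - m b = ∑ ω : Fin n → α, W ω * (f (Fin.cons a ω) - f (Fin.cons b ω)) := by
        rw [hm]; rw [← Finset.sum_sub_distrib]
        exact Finset.sum_congr rfl fun ω _ => by ring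
      rw [this]
      calc ∑ ω : Fin n → α, W ω * (f (Fin.cons a ω) - f (Fin.cons b ω))
          ≤ ∑ ω : Fin n → α, W ω * 1 := Finset.sum_le_sum fun ω _ => by
            refine mul_le_mul_of_nonneg_left ?_ (hW0 ω)
            refine hf _ _ 0 fun j hj => ?_
            obtain ⟨k, rfl⟩ := Fin.eq_succ_of_ne_zero hj
            simp [Fin.cons_succ]
        _ = 1 := by simp [hW1]
    have inner : ∀ a, ∑ ω : Fin n → α, W ω * Real.exp (2 * t * (f (Fin.cons a ω) - m a))
        ≤ Real.exp (n * t ^ 2) := by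
      intro a
      have := ih (fun ω => f (Fin.cons a ω)) ?_ ht0 ht1
      · exact this
      · intro g h i hgh
        refine hf _ _ i.succ fun j hj => ?_
        rcases eq_or_ne j 0 with rfl | hj0
        · simp
        · obtain ⟨k, rfl⟩ := Fin.eq_succ_of_ne_zero hj0
          simp only [Fin.cons_succ]
          exact hgh k fun hk => hj (by rw [hk])
    calc ∑ g : Fin (n+1) → α, (∏ i, w (g i)) * Real.exp (2 * t * (f g - E))
        = ∑ a : α, ∑ ω : Fin n → α, (w a * W ω) *
            (Real.exp (2 * t * (m a - E)) * Real.exp (2 * t * (f (Fin.cons a ω) - m a))) := by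
          rw [sum_succ11]
          refine Finset.sum_congr rfl fun a _ => Finset.sum_congr rfl fun ω _ => ?_
          rw [Fin.prod_univ_succ, Fin.cons_zero, ← Real.exp_add]
          simp only [Fin.cons_succ]
          congr 2
          ring
      _ = ∑ a : α, w a * Real.exp (2 * t * (m a - E)) *
            ∑ ω : Fin n → α, W ω * Real.exp (2 * t * (f (Fin.cons a ω) - m a)) := by
          refine Finset.sum_congr rfl fun a _ => ?_
          rw [Finset.mul_sum]
          exact Finset.sum_congr rfl fun ω _ => by ring
      _ ≤ ∑ a : α, w a * Real.exp (2 * t * (m a - E)) * Real.exp (n * t ^ 2) := by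
          refine Finset.sum_le_sum fun a _ => ?_
          exact mul_le_mul_of_nonneg_left (inner a)
            (mul_nonneg (hw0 a) (Real.exp_pos _).le)
      _ = Real.exp (n * t ^ 2) * ∑ a : α, w a * Real.exp (2 * t * (m a - E)) := by
          rw [Finset.mul_sum]; exact Finset.sum_congr rfl fun a _ => by ring
      _ ≤ Real.exp (n * t ^ 2) * Real.exp (t ^ 2) := by
          refine mul_le_mul_of_nonneg_left ?_ (Real.exp_pos _).le
          have := onevar11 w hw0 hw1 m hmdiff ht0 ht1
          rw [← hEm] at this
          exact this
      _ = Real.exp ((n+1 : ℕ) * t ^ 2) := by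
          rw [← Real.exp_add]; push_cast; ring_nf

private lemma chern11 (w : α → ℝ) (hw0 : ∀ a, 0 ≤ w a)
    (hw1 : ∑ a, w a = 1) {n : ℕ} (hn : 1 ≤ n) (f : (Fin n → α) → ℝ)
    (hf : ∀ g h : Fin n → α, ∀ i : Fin n, (∀ j, j ≠ i → g j = h j) → f g - f h ≤ 1)
    {T : ℝ} (hT0 : 0 ≤ T) (hTn : T ≤ n) :
    ∑ g : Fin n → α, (∏ i, w (g i)) *
      (if T ≤ f g - ∑ h : Fin n → α, (∏ i, w (h i)) * f h then (1:ℝ) else 0)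
      ≤ Real.exp (-T ^ 2 / n) := by
  have hnR : (0:ℝ) < n := by exact_mod_cast hn
  set t := T / n with ht
  have ht0 : 0 ≤ t := div_nonneg hT0 hnR.le
  have ht1 : t ≤ 1 := (div_le_one hnR).2 hTn
  set E : ℝ := ∑ h : Fin n → α, (∏ i, w (h i)) * f h with hE
  have key := mgf11 w hw0 hw1 n f hf ht0 ht1
  have point : ∀ g : Fin n → α,
      (∏ i, w (g i)) * (if T ≤ f g - E then (1:ℝ) else 0)
      ≤ (∏ i, w (g i)) * (Real.exp (- (2 * t * T)) * Real.exp (2 * t * (f g - E))) := by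
    intro g
    refine mul_le_mul_of_nonneg_left ?_ (Finset.prod_nonneg fun i _ => hw0 _)
    rw [← Real.exp_add]
    split
    · rename_i h
      refine Real.one_le_exp ?_
      have : 0 ≤ 2 * t * (f g - E - T) := by
        apply mul_nonneg (by linarith) (by linarith)
      nlinarith
    · positivity
  calc ∑ g : Fin n → α, (∏ i, w (g i)) * (if T ≤ f g - E then (1:ℝ) else 0)
      ≤ ∑ g : Fin n → α, (∏ i, w (g i)) *
          (Real.exp (-(2 * t * T)) * Real.exp (2 * t * (f g - E))) :=
        Finset.sum_le_sum fun g _ => point g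
    _ = Real.exp (-(2 * t * T)) * ∑ g : Fin n → α,
          (∏ i, w (g i)) * Real.exp (2 * t * (f g - E)) := by
        rw [Finset.mul_sum]; exact Finset.sum_congr rfl fun g _ => by ring
    _ ≤ Real.exp (-(2 * t * T)) * Real.exp (n * t ^ 2) :=
        mul_le_mul_of_nonneg_left key (Real.exp_pos _).le
    _ = Real.exp (-T ^ 2 / n) := by
        rw [← Real.exp_add]
        congr 1
        rw [ht]
        field_simp
        ring

end StmtAux

section App

variable {N : ℕ} (A : Set (Fin N → Bool))

private lemma dl_le11 (l x : Fin N → Bool) (y : Fin N → Bool) : dl l x y ≤ N := by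
  calc dl l x y ≤ Finset.univ.card := Finset.card_filter_le _ _
  _ = N := by simp

private lemma dlToSet_le11 (hA : A.Nonempty) (l x : Fin N → Bool) : dlToSet l x A ≤ N := by
  obtain ⟨y, hy⟩ := hA
  exact le_trans (Nat.sInf_le ⟨y, hy, rfl⟩) (dl_le11 l x y)

private lemma dl_diff11 (l x l' x' y : Fin N → Bool) (i : Fin N)
    (h : ∀ j, j ≠ i → x j = x' j ∧ l j = l' j) :
    dl l x y ≤ dl l' x' y + 1 := by
  classical
  have hsub : (Finset.univ.filter fun j => x j ≠ y j ∧ l j = true)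
      ⊆ insert i (Finset.univ.filter fun j => x' j ≠ y j ∧ l' j = true) := by
    intro j hj
    rw [Finset.mem_filter] at hj
    rcases eq_or_ne j i with rfl | hne
    · exact Finset.mem_insert_self _ _
    · refine Finset.mem_insert_of_mem (Finset.mem_filter.2 ⟨Finset.mem_univ _, ?_⟩)
      obtain ⟨hx, hl⟩ := h j hne
      rw [← hx, ← hl]
      exact hj.2
  calc dl l x y ≤ (insert i (Finset.univ.filter fun j => x' j ≠ y j ∧ l' j = true)).card :=
      Finset.card_le_card hsub
  _ ≤ dl l' x' y + 1 := Finset.card_insert_le _ _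

private lemma dlToSet_diff11 (hA : A.Nonempty) (l x l' x' : Fin N → Bool) (i : Fin N)
    (h : ∀ j, j ≠ i → x j = x' j ∧ l j = l' j) :
    dlToSet l x A ≤ dlToSet l' x' A + 1 := by
  have hne : ((fun y => dl l' x' y) '' A).Nonempty := hA.image _
  obtain ⟨y, hyA, hy⟩ := Nat.sInf_mem hne
  calc dlToSet l x A ≤ dl l x y := Nat.sInf_le ⟨y, hyA, rfl⟩
  _ ≤ dl l' x' y + 1 := dl_diff11 l x l' x' y i h
  _ = dlToSet l' x' A + 1 := by
      simp only at hy
      rw [dlToSet, ← hy]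

end App

open Classical in
/-- Lemma 6.2: for `0 < p ≤ 1`, nonempty `A ⊆ C_N` and `δ ≥ 0`, if `x` is uniform on `C_N`
and `l` has independent Bernoulli(p) coordinates (independent of `x`), then
`P(|d_l(x,A) - Δ(A,p)| ≥ δ + 4√N) ≤ 4 e^{-δ²/N}`. The probability of the event is written
as the sum of `bernWeight p l / 2^N` over the pairs `(x,l)` in the event. -/
theorem stmt11 (p : ℝ) (hp0 : 0 < p) (hp1 : p ≤ 1) {N : ℕ} (hN : 1 ≤ N)
    (A : Set (Fin N → Bool)) (hA : A.Nonempty) (δ : ℝ) (hδ : 0 ≤ δ) :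
    (∑ ω : (Fin N → Bool) × (Fin N → Bool),
        if δ + 4 * Real.sqrt N ≤ |(dlToSet ω.2 ω.1 A : ℝ) - avgDistP p A| then
          bernWeight p ω.2 / 2 ^ N
        else 0) ≤
      4 * Real.exp (-δ ^ 2 / N) := by
  set T := δ + 4 * Real.sqrt N with hT
  have hsqrt : 0 ≤ Real.sqrt N := Real.sqrt_nonneg _
  have hT0 : 0 ≤ T := by rw [hT]; linarith
  set w : Bool × Bool → ℝ := fun a => (if a.2 = true then p else 1 - p) / 2 with hw
  have hw0 : ∀ a, 0 ≤ w a := by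
    intro a; rw [hw]; dsimp only; split <;> linarith
  have hw1 : ∑ a, w a = 1 := by
    rw [hw]
    rw [Fintype.sum_prod_type]
    simp [Fintype.sum_bool]
    ring
  set f : (Fin N → Bool × Bool) → ℝ :=
    fun g => (dlToSet (fun i => (g i).2) (fun i => (g i).1) A : ℝ) with hfdef
  set E : ℝ := ∑ h : Fin N → Bool × Bool, (∏ i, w (h i)) * f h with hE
  -- weight identity
  have hweight : ∀ g : Fin N → Bool × Bool,
      bernWeight p (fun i => (g i).2) / 2 ^ N = ∏ i, w (g i) := by
    intro g
    rw [bernWeight, hw]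
    dsimp only
    rw [Finset.prod_div_distrib, Finset.prod_const]
    rw [Finset.prod_ite, Finset.prod_const, Finset.prod_const]
    simp only [Bool.not_eq_true, Finset.filter_congr_decidable, Fintype.card_fin,
      Finset.card_univ]
  -- avgDistP = E
  have havg : avgDistP p A = E := by
    calc avgDistP p A
        = ∑ q : (Fin N → Bool) × (Fin N → Bool),
            (bernWeight p q.1 / 2 ^ N) * (dlToSet q.1 q.2 A : ℝ) := by
          rw [avgDistP, Fintype.sum_prod_type]
          simp [Fintype.card_fin]
      _ = E := by
          rw [hE, ← ((Equiv.arrowProdEquivProdArrow (Fin N) (fun _ => Bool) (fun _ => Bool)).trans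
              (Equiv.prodComm _ _)).sum_comp
            (fun q : ((Fin N → Bool) × (Fin N → Bool)) =>
              (bernWeight p q.1 / 2 ^ N) * (dlToSet q.1 q.2 A : ℝ))]
          refine Finset.sum_congr rfl fun g _ => ?_
          simp only [Equiv.trans_apply, Equiv.prodComm_apply, Equiv.arrowProdEquivProdArrow,
            Equiv.coe_fn_mk, Prod.swap_prod_mk]
          rw [hweight g]
  -- bounded differences
  have hf : ∀ g h : Fin N → Bool × Bool, ∀ i : Fin N,
      (∀ j, j ≠ i → g j = h j) → f g - f h ≤ 1 := by
    intro g h i hgh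
    have hnat := dlToSet_diff11 A hA (fun i => (g i).2) (fun i => (g i).1)
      (fun i => (h i).2) (fun i => (h i).1) i
      (fun j hj => ⟨congrArg Prod.fst (hgh j hj), congrArg Prod.snd (hgh j hj)⟩)
    rw [hfdef]
    dsimp only
    have := (Nat.cast_le (α := ℝ)).2 hnat
    push_cast at this
    linarith
  -- bounds on f and E
  have hf0 : ∀ g, 0 ≤ f g := fun g => Nat.cast_nonneg _
  have hfN : ∀ g, f g ≤ N := by
    intro g
    rw [hfdef]
    dsimp only
    exact_mod_cast dlToSet_le11 A hA _ _
  have hsumW : ∑ g : Fin N → Bool × Bool, ∏ i, w (g i) = 1 := sumW11 w hw1 N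
  have hprod0 : ∀ g : Fin N → Bool × Bool, 0 ≤ ∏ i, w (g i) :=
    fun g => Finset.prod_nonneg fun i _ => hw0 _
  have hE0 : 0 ≤ E := by
    rw [hE]
    exact Finset.sum_nonneg fun g _ => mul_nonneg (hprod0 g) (hf0 g)
  have hEN : E ≤ N := by
    rw [hE]
    calc ∑ h : Fin N → Bool × Bool, (∏ i, w (h i)) * f h
        ≤ ∑ h : Fin N → Bool × Bool, (∏ i, w (h i)) * N :=
          Finset.sum_le_sum fun g _ => mul_le_mul_of_nonneg_left (hfN g) (hprod0 g)
      _ = N := by rw [← Finset.sum_mul, hsumW, one_mul]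
  -- rewrite LHS
  have hLHS : (∑ ω : (Fin N → Bool) × (Fin N → Bool),
      if T ≤ |(dlToSet ω.2 ω.1 A : ℝ) - avgDistP p A| then
        bernWeight p ω.2 / 2 ^ N else 0)
      = ∑ g : Fin N → Bool × Bool,
          (∏ i, w (g i)) * (if T ≤ |f g - E| then (1:ℝ) else 0) := by
    rw [← (Equiv.arrowProdEquivProdArrow (Fin N) (fun _ => Bool) (fun _ => Bool)).sum_comp
      (fun ω : ((Fin N → Bool) × (Fin N → Bool)) =>
        if T ≤ |(dlToSet ω.2 ω.1 A : ℝ) - avgDistP p A| then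
          bernWeight p ω.2 / 2 ^ N else 0)]
    refine Finset.sum_congr rfl fun g _ => ?_
    simp only [Equiv.arrowProdEquivProdArrow, Equiv.coe_fn_mk]
    rw [havg, hweight g]
    split <;> rename_i h <;> simp [h]
  rw [hLHS]
  rcases le_or_gt T (N : ℝ) with hTN | hTN
  · -- Chernoff case
    have upper := chern11 w hw0 hw1 hN f hf hT0 hTN
    set f' : (Fin N → Bool × Bool) → ℝ := fun g => -f g with hf'def
    have hf' : ∀ g h : Fin N → Bool × Bool, ∀ i : Fin N,
        (∀ j, j ≠ i → g j = h j) → f' g - f' h ≤ 1 := by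
      intro g h i hgh
      have := hf h g i fun j hj => (hgh j hj).symm
      rw [hf'def]; dsimp only; linarith
    have hE' : ∑ h : Fin N → Bool × Bool, (∏ i, w (h i)) * f' h = -E := by
      rw [hf'def, hE, ← Finset.sum_neg_distrib]
      exact Finset.sum_congr rfl fun g _ => by ring
    have lower := chern11 w hw0 hw1 hN f' hf' hT0 hTN
    rw [hE'] at lower
    have lower' : ∑ g : Fin N → Bool × Bool,
        (∏ i, w (g i)) * (if T ≤ E - f g then (1:ℝ) else 0) ≤ Real.exp (-T ^ 2 / N) := by
      refine le_trans (le_of_eq (Finset.sum_congr rfl fun g _ => ?_)) lower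
      congr 1
      apply if_congr _ rfl rfl
      rw [hf'def]
      constructor <;> intro <;> dsimp only at * <;> linarith
    have combine : ∑ g : Fin N → Bool × Bool,
        (∏ i, w (g i)) * (if T ≤ |f g - E| then (1:ℝ) else 0)
        ≤ (∑ g : Fin N → Bool × Bool, (∏ i, w (g i)) * (if T ≤ f g - E then (1:ℝ) else 0))
          + ∑ g : Fin N → Bool × Bool, (∏ i, w (g i)) * (if T ≤ E - f g then (1:ℝ) else 0) := by
      rw [← Finset.sum_add_distrib]
      refine Finset.sum_le_sum fun g _ => ?_
      rw [← mul_add]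
      refine mul_le_mul_of_nonneg_left ?_ (hprod0 g)
      rcases abs_cases (f g - E) with ⟨habs, -⟩ | ⟨habs, -⟩ <;> rw [habs] <;>
        split_ifs <;> linarith
    have hNpos : (0:ℝ) < N := by exact_mod_cast hN
    have hTd : Real.exp (-T ^ 2 / (N:ℝ)) ≤ Real.exp (-δ ^ 2 / (N:ℝ)) := by
      refine Real.exp_le_exp.2 ?_
      have hd2 : δ ^ 2 ≤ T ^ 2 := by nlinarith
      rw [div_eq_mul_inv, div_eq_mul_inv]
      exact mul_le_mul_of_nonneg_right (by linarith) (inv_nonneg.2 hNpos.le)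
    refine combine.trans ?_
    refine (add_le_add upper lower').trans ?_
    have hexp2 := (Real.exp_pos (-δ ^ 2 / (N:ℝ))).le
    linarith
  · -- event empty
    have hzero : ∀ g : Fin N → Bool × Bool,
        (∏ i, w (g i)) * (if T ≤ |f g - E| then (1:ℝ) else 0) = 0 := by
      intro g
      rw [if_neg, mul_zero]
      intro habs
      have h1 : |f g - E| ≤ N := by
        rw [abs_le]
        constructor <;> [linarith [hf0 g, hEN]; linarith [hfN g, hE0]]
      linarith
    rw [Finset.sum_eq_zero fun g _ => hzero g]
    positivity
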